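/- arXiv:0901.3671 — 2 statements merged into one kernel-verified Lean document; each statement's English description precedes it below -/
import Mathlib

section
/- Let α and β be positive long roots with α ≤ β in the dominance order (β − α a nonnegative integer combination of simple roots). Then there exists a sequence of long roots β = β₀, β₁, …, β_k = α and simple roots γ₁, …, γ_k such that β_i = s_{γ_i}(β_{i−1}) and L(β_i) = L(β_{i−1}) + 1 for all i (a 'simple path' from β to α). -/
open scoped RealInnerProductSpace

variable {V : Type*} [NormedAddCommGroup V] [InnerProductSpace ℝ V]

/-- An irreducible reduced (crystallographic) root system in a real inner product space. -/
structure IsIrredRootSystem (Φ : Set V) : Prop where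
  finite : Φ.Finite
  nonempty : Φ.Nonempty
  nonzero : (0 : V) ∉ Φ
  spanning : Submodule.span ℝ Φ = ⊤
  reflect_mem : ∀ α ∈ Φ, ∀ β ∈ Φ, β - (2 * ⟪α, β⟫ / ⟪α, α⟫) • α ∈ Φ
  crystallographic : ∀ α ∈ Φ, ∀ β ∈ Φ, ∃ n : ℤ, 2 * ⟪α, β⟫ / ⟪α, α⟫ = (n : ℝ)
  reduced : ∀ α ∈ Φ, ∀ t : ℝ, t • α ∈ Φ → t = 1 ∨ t = -1
  irreducible : ∀ Φ₁ Φ₂ : Set V, Φ₁ ∪ Φ₂ = Φ →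
    (∀ α ∈ Φ₁, ∀ β ∈ Φ₂, ⟪α, β⟫ = 0) → Φ₁ = ∅ ∨ Φ₂ = ∅

/-- `Δ` is a base (system of simple roots) for `Φ`: it is contained in `Φ`, linearly
independent, and every root is an integral combination of `Δ` with coefficients all of
the same sign. -/
def IsBase (Φ : Set V) (Δ : Finset V) : Prop :=
  (Δ : Set V) ⊆ Φ ∧ LinearIndependent ℝ (fun a : Δ => (a : V)) ∧
    ∀ γ ∈ Φ, ∃ c : V → ℤ, γ = ∑ α ∈ Δ, (c α : ℝ) • α ∧
      ((∀ α ∈ Δ, 0 ≤ c α) ∨ (∀ α ∈ Δ, c α ≤ 0))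

/-- The positive roots with respect to the base `Δ`. -/
def posRoots (Φ : Set V) (Δ : Finset V) : Set V :=
  {γ ∈ Φ | ∃ c : V → ℕ, γ = ∑ α ∈ Δ, (c α : ℝ) • α}

/-- The coroot `γ^∨ = 2γ/(γ|γ)` of a root `γ`. -/
noncomputable def coroot (γ : V) : V := (2 / ⟪γ, γ⟫) • γ

/-- The set of reflections in the roots of `Φ`, as linear automorphisms of `V`. -/
def reflections (Φ : Set V) : Set (V ≃ₗ[ℝ] V) :=
  {w | ∃ α ∈ Φ, ∀ v, w v = v - (2 * ⟪α, v⟫ / ⟪α, α⟫) • α}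

/-- The Weyl group of `Φ`: the group generated by the reflections in the roots. -/
def weylGroup (Φ : Set V) : Subgroup (V ≃ₗ[ℝ] V) := Subgroup.closure (reflections Φ)

/-- The simple reflections with respect to the base `Δ`. -/
def simpleReflections (Δ : Finset V) : Set (V ≃ₗ[ℝ] V) :=
  {w | ∃ α ∈ Δ, ∀ v, w v = v - (2 * ⟪α, v⟫ / ⟪α, α⟫) • α}

/-- The length of `w` with respect to the simple reflections determined by `Δ`. -/
noncomputable def len (Δ : Finset V) (w : V ≃ₗ[ℝ] V) : ℕ :=
  sInf {n | ∃ L : List (V ≃ₗ[ℝ] V),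
    (∀ s ∈ L, s ∈ simpleReflections Δ) ∧ L.length = n ∧ L.prod = w}

/-- `t` is the highest root of `Φ` with respect to the base `Δ`. -/
def IsHighestRoot (Φ : Set V) (Δ : Finset V) (t : V) : Prop :=
  t ∈ Φ ∧ ∀ α ∈ Φ, ∃ c : V → ℕ, t - α = ∑ a ∈ Δ, (c a : ℝ) • a

section Helpers

attribute [local instance] Classical.propDecidable

variable {Φ : Set V} {Δ : Finset V} {r : ℝ}

lemma coeff_eq (hli : LinearIndependent ℝ (fun a : Δ => (a : V)))
    {x y : V → ℝ} (h : ∑ a ∈ Δ, x a • a = ∑ a ∈ Δ, y a • a) :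
    ∀ a ∈ Δ, x a = y a := by
  intro a ha
  have h0 : ∑ b ∈ Δ.attach, (x b.1 - y b.1) • (b.1 : V) = 0 := by
    rw [Finset.sum_attach Δ (fun z => (x z - y z) • z)]
    simp only [sub_smul, Finset.sum_sub_distrib, h, sub_self]
  have h1 := linearIndependent_iff'.mp hli Finset.univ (fun b => x b.1 - y b.1)
    (by rw [Finset.univ_eq_attach]; exact h0) ⟨a, ha⟩ (Finset.mem_univ _)
  have : x a - y a = 0 := h1
  linarith

lemma sum_delta (a : V) (ha : a ∈ Δ) (m : ℝ) :
    ∑ x ∈ Δ, (if x = a then m else 0) • x = m • a := by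
  have : ∀ x ∈ Δ, (if x = a then m else 0) • x = (if x = a then m • x else 0) := by
    intro x hx; split <;> simp
  rw [Finset.sum_congr rfl this, Finset.sum_ite_eq' Δ a (fun x => m • x), if_pos ha]

lemma inner_self_pos' {x : V} (hx : x ≠ 0) : 0 < ⟪x,x⟫ :=
  lt_of_le_of_ne real_inner_self_nonneg (fun h => hx (inner_self_eq_zero.mp h.symm))

lemma inner_pos_of_mem (hΦ : IsIrredRootSystem Φ) {x : V} (hx : x ∈ Φ) : 0 < ⟪x,x⟫ :=
  inner_self_pos' (fun h => hΦ.nonzero (h ▸ hx))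

lemma r_pos (hΦ : IsIrredRootSystem Φ)
    (hr : IsGreatest {x : ℝ | ∃ α ∈ Φ, x = ⟪α, α⟫} r) : 0 < r := by
  obtain ⟨γ, hγ⟩ := hΦ.nonempty
  exact lt_of_lt_of_le (inner_pos_of_mem hΦ hγ) (hr.2 ⟨γ, hγ, rfl⟩)

lemma reflect_norm (a x : V) (ha : ⟪a,a⟫ ≠ 0) :
    ⟪x - (2*⟪a,x⟫/⟪a,a⟫) • a, x - (2*⟪a,x⟫/⟪a,a⟫) • a⟫ = ⟪x,x⟫ := by
  simp only [inner_sub_left, inner_sub_right, real_inner_smul_left, real_inner_smul_right]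
  rw [real_inner_comm x a]
  field_simp
  ring

lemma two_inner_eq (hΦ : IsIrredRootSystem Φ)
    (hr : IsGreatest {x : ℝ | ∃ α ∈ Φ, x = ⟪α, α⟫} r)
    {x y : V} (hx : x ∈ Φ) (hy : y ∈ Φ) (hyr : ⟪y,y⟫ = r)
    (hne : x ≠ y) (hpos : 0 < ⟪x,y⟫) : 2*⟪x,y⟫ = r := by
  have hr0 : 0 < r := r_pos hΦ hr
  obtain ⟨z, hz⟩ := hΦ.crystallographic y hy x hx
  rw [real_inner_comm x y, hyr] at hz
  have hz' : 2*⟪x,y⟫ = z * r := by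
    field_simp at hz; linarith
  have hz1 : 1 ≤ z := by
    by_contra hlt
    push_neg at hlt
    have : (z:ℝ) ≤ 0 := by exact_mod_cast Int.lt_add_one_iff.mp hlt
    nlinarith
  rcases eq_or_lt_of_le hz1 with h1 | h2
  · rw [← h1] at hz'; simpa using hz'
  · exfalso
    have hz2 : (2:ℝ) ≤ z := by exact_mod_cast h2
    have hcs := real_inner_mul_inner_self_le x y
    have hxxr : ⟪x,x⟫ ≤ r := hr.2 ⟨x, hx, rfl⟩
    have hxy_r : ⟪x,y⟫ = r := by nlinarith
    have hxx_r : ⟪x,x⟫ = r := by nlinarith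
    have h0 : ⟪y - x, y - x⟫ = 0 := by
      simp only [inner_sub_left, inner_sub_right]
      rw [real_inner_comm x y]
      nlinarith
    have : y - x = 0 := inner_self_eq_zero.mp h0
    exact hne (sub_eq_zero.mp this).symm

lemma exists_simple_pos_inner {v : V} (hv : v ≠ 0) (c : V → ℕ)
    (hc : v = ∑ x ∈ Δ, (c x : ℝ) • x) :
    ∃ a ∈ Δ, 0 < c a ∧ 0 < ⟪a, v⟫ := by
  by_contra hcon
  push_neg at hcon
  have hle : ⟪v,v⟫ ≤ 0 := by
    nth_rewrite 1 [hc]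
    rw [sum_inner]
    apply Finset.sum_nonpos
    intro a ha
    rw [real_inner_smul_left]
    rcases Nat.eq_zero_or_pos (c a) with h | h
    · simp [h]
    · exact mul_nonpos_of_nonneg_of_nonpos (by positivity) (hcon a ha h)
  exact absurd hle (not_le.mpr (inner_self_pos' hv))

lemma reflect_pos (hΦ : IsIrredRootSystem Φ) (hΔ : IsBase Φ Δ)
    {a γ : V} (ha : a ∈ Δ) (hγΦ : γ ∈ Φ) (hne : γ ≠ a) {m : ℝ}
    (hmem : γ - m • a ∈ Φ) {c : V → ℕ} (hc : γ = ∑ x ∈ Δ, (c x : ℝ) • x) :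
    ∃ d : V → ℕ, (γ - m • a = ∑ x ∈ Δ, (d x : ℝ) • x) ∧
      (∀ x ∈ Δ, x ≠ a → d x = c x) ∧ (d a : ℝ) = c a - m := by
  obtain ⟨e, he, hsign⟩ := hΔ.2.2 _ hmem
  have hrep : γ - m • a = ∑ x ∈ Δ, ((c x : ℝ) - (if x = a then m else 0)) • x := by
    simp only [sub_smul, Finset.sum_sub_distrib, ← hc, sum_delta a ha m]
  have key : ∀ x ∈ Δ, (e x : ℝ) = (c x : ℝ) - (if x = a then m else 0) :=
    coeff_eq hΔ.2.1 (he.symm.trans hrep)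
  have hx0 : ∃ x ∈ Δ, x ≠ a ∧ 0 < c x := by
    by_contra h
    push_neg at h
    have hγa : γ = (c a : ℝ) • a := by
      rw [hc, Finset.sum_eq_single a]
      · intro x hx hxa
        have : c x = 0 := Nat.le_zero.mp (h x hx hxa)
        simp [this]
      · intro h'; exact absurd ha h'
    have hred := hΦ.reduced a (hΔ.1 ha) (c a) (hγa ▸ hγΦ)
    rcases hred with h1 | h1
    · have : c a = 1 := by exact_mod_cast h1
      exact hne (by rw [hγa, this]; simp)
    · have : (0:ℝ) ≤ (c a : ℝ) := by positivity
      linarith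
  obtain ⟨x₀, hx₀Δ, hx₀ne, hx₀pos⟩ := hx0
  have hsign' : ∀ x ∈ Δ, 0 ≤ e x := by
    rcases hsign with h | h
    · exact h
    · exfalso
      have h1 := key x₀ hx₀Δ
      rw [if_neg hx₀ne] at h1
      have h2 := h x₀ hx₀Δ
      have : (e x₀ : ℝ) ≤ 0 := by exact_mod_cast h2
      have : (0:ℝ) < c x₀ := by exact_mod_cast hx₀pos
      linarith
  refine ⟨fun x => (e x).toNat, ?_, ?_, ?_⟩
  · rw [he]
    apply Finset.sum_congr rfl
    intro x hx
    have : (((e x).toNat : ℕ) : ℝ) = ((e x : ℤ) : ℝ) := by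
      rw [← Int.cast_natCast, Int.toNat_of_nonneg (hsign' x hx)]
    rw [this]
  · intro x hx hxa
    have h1 := key x hx
    rw [if_neg hxa] at h1
    have : ((e x).toNat : ℝ) = (c x : ℝ) := by
      rw [← Int.cast_natCast, Int.toNat_of_nonneg (hsign' x hx)]; simpa using h1
    exact_mod_cast this
  · have h1 := key a ha
    rw [if_pos rfl] at h1
    rw [← Int.cast_natCast, Int.toNat_of_nonneg (hsign' a ha)]
    exact h1

lemma long_coeff (hΦ : IsIrredRootSystem Φ) (hΔ : IsBase Φ Δ)
    (hr : IsGreatest {x : ℝ | ∃ α ∈ Φ, x = ⟪α, α⟫} r) :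
    ∀ n : ℕ, ∀ γ : V, γ ∈ Φ → ⟪γ,γ⟫ = r → ∀ c : V → ℕ,
      γ = ∑ x ∈ Δ, (c x : ℝ) • x → ∑ x ∈ Δ, c x = n →
      ∀ a ∈ Δ, ∃ j : ℕ, (c a : ℝ) * ⟪a,a⟫ = (j : ℝ) * r := by
  intro n
  induction n using Nat.strong_induction_on with
  | _ n IH =>
  intro γ hγΦ hγr c hc hsum a ha
  by_cases hγΔ : γ ∈ Δ
  · have hγsum : γ = ∑ x ∈ Δ, (if x = γ then (1:ℝ) else 0) • x := by
      rw [sum_delta γ hγΔ 1, one_smul]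
    have hcoef := coeff_eq hΔ.2.1 (hc.symm.trans hγsum)
    by_cases haγ : a = γ
    · subst haγ
      have h1 := hcoef a ha
      rw [if_pos rfl] at h1
      refine ⟨1, ?_⟩
      rw [h1, hγr]; ring
    · have h1 := hcoef a ha
      rw [if_neg haγ] at h1
      exact ⟨0, by rw [h1]; ring⟩
  · have hγ0 : γ ≠ 0 := fun h => hΦ.nonzero (h ▸ hγΦ)
    obtain ⟨a', ha', hca', hinner⟩ := exists_simple_pos_inner hγ0 c hc
    have ha'Φ := hΔ.1 ha'
    have haa' : 0 < ⟪a',a'⟫ := inner_pos_of_mem hΦ ha'Φ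
    have hinner' : 0 < ⟪a', γ⟫ := hinner
    set m : ℝ := 2*⟪a',γ⟫/⟪a',a'⟫ with hm
    have hmpos : 0 < m := div_pos (by linarith) haa'
    obtain ⟨z, hz⟩ := hΦ.crystallographic a' ha'Φ γ hγΦ
    have hmem : γ - m • a' ∈ Φ := hΦ.reflect_mem a' ha'Φ γ hγΦ
    have hneγ : γ ≠ a' := fun h => hγΔ (h ▸ ha')
    obtain ⟨d, hd, hdx, hda⟩ := reflect_pos hΦ hΔ ha' hγΦ hneγ hmem hc
    have h2 : 2*⟪a',γ⟫ = r := two_inner_eq hΦ hr ha'Φ hγΦ hγr (Ne.symm hneγ) hinner'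
    have hma : m * ⟪a',a'⟫ = r := by
      rw [hm]; field_simp; linarith
    have hzm : (z:ℝ) = m := by rw [hm, ← hz]
    have hz1 : 1 ≤ z := by
      have h0 : (0:ℝ) < z := by rw [hzm]; exact hmpos
      have : 0 < z := by exact_mod_cast h0
      omega
    set N := z.toNat with hNdef
    have hzN : (N:ℤ) = z := Int.toNat_of_nonneg (by omega)
    have hN : (N:ℝ) = m := by rw [← hzm, ← hzN]; norm_num
    have hN1 : 1 ≤ N := by omega
    have hca'N : d a' + N = c a' := by
      have : ((d a' + N : ℕ) : ℝ) = (c a' : ℝ) := by push_cast; rw [hda, hN]; ring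
      exact_mod_cast this
    have hsum' : ∑ x ∈ Δ, d x + N = n := by
      rw [← hsum, ← Finset.add_sum_erase Δ d ha', ← Finset.add_sum_erase Δ c ha']
      have herase : ∑ x ∈ Δ.erase a', d x = ∑ x ∈ Δ.erase a', c x :=
        Finset.sum_congr rfl (fun x hx =>
          hdx x (Finset.mem_of_mem_erase hx) (Finset.ne_of_mem_erase hx))
      rw [herase]
      omega
    have hγ'r : ⟪γ - m•a', γ - m•a'⟫ = r := by
      rw [hm, reflect_norm a' γ (ne_of_gt haa'), hγr]
    obtain ⟨j, hj⟩ := IH (∑ x ∈ Δ, d x) (by omega) (γ - m•a') hmem hγ'r d hd rfl a ha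
    by_cases hxa : a = a'
    · subst hxa
      refine ⟨j+1, ?_⟩
      have hca : (c a : ℝ) = (d a : ℝ) + m := by rw [hda]; ring
      rw [hca, add_mul, hj]
      push_cast
      rw [hma]
      ring
    · refine ⟨j, ?_⟩
      rw [← hdx a ha hxa] at *
      exact hj

lemma coroot_drop (f : V →ₗ[ℝ] ℝ) {a x : V} {m : ℝ} (hr0 : r ≠ 0) (haa : ⟪a,a⟫ ≠ 0)
    (hfa : f (coroot a) = 1) (hx : ⟪x,x⟫ = r) (hx' : ⟪x - m•a, x - m•a⟫ = r)
    (hma : m * ⟪a,a⟫ = r) :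
    f (coroot (x - m•a)) = f (coroot x) - 1 := by
  have hfa' : f a = ⟪a,a⟫/2 := by
    rw [coroot, map_smul, smul_eq_mul] at hfa
    field_simp at hfa
    linarith
  rw [coroot, coroot, hx, hx', map_smul, map_smul, map_sub, map_smul]
  simp only [smul_eq_mul]
  rw [hfa']
  have : m * (⟪a,a⟫/2) = r/2 := by linarith
  rw [mul_sub, this]
  field_simp

lemma main_chain (hΦ : IsIrredRootSystem Φ) (hΔ : IsBase Φ Δ)
    (hr : IsGreatest {x : ℝ | ∃ α ∈ Φ, x = ⟪α, α⟫} r)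
    (f : V →ₗ[ℝ] ℝ) (hf : ∀ a ∈ Δ, f (coroot a) = 1) :
    ∀ n : ℕ, ∀ α β : V, α ∈ posRoots Φ Δ → ⟪α, α⟫ = r → β ∈ posRoots Φ Δ → ⟪β, β⟫ = r →
      ∀ c : V → ℕ, β - α = ∑ x ∈ Δ, (c x : ℝ) • x → ∑ x ∈ Δ, c x = n →
      ∃ (k : ℕ) (b g : ℕ → V), b 0 = β ∧ b k = α ∧
        ∀ i < k, g i ∈ Δ ∧
          b (i + 1) = b i - (2 * ⟪g i, b i⟫ / ⟪g i, g i⟫) • g i ∧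
          b (i + 1) ∈ posRoots Φ Δ ∧ ⟪b (i + 1), b (i + 1)⟫ = r ∧
          f (coroot (b (i + 1))) = f (coroot (b i)) - 1 := by
  intro n
  induction n using Nat.strong_induction_on with
  | _ n IH =>
  intro α β hα hαr hβ hβr c hc hcsum
  have hrpos : 0 < r := r_pos hΦ hr
  obtain ⟨hαΦ, dα, hdα⟩ := hα
  obtain ⟨hβΦ, dβ, hdβ⟩ := hβ
  by_cases hzero : ∀ x ∈ Δ, c x = 0
  · have h0 : β - α = 0 := by
      rw [hc]; apply Finset.sum_eq_zero; intro x hx; simp [hzero x hx]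
    have hβα : β = α := by rwa [sub_eq_zero] at h0
    exact ⟨0, fun _ => α, fun _ => α, hβα.symm, rfl, fun i hi => absurd hi (Nat.not_lt_zero i)⟩
  · push_neg at hzero
    have hv : β - α ≠ 0 := by
      intro h
      have h2 := coeff_eq (x := fun z => (c z : ℝ)) (y := fun _ => (0:ℝ)) hΔ.2.1
        (by rw [← hc, h]; simp)
      obtain ⟨x₀, hx₀, hcx₀⟩ := hzero
      exact hcx₀ ((Nat.cast_eq_zero (R := ℝ)).mp (by simpa using h2 x₀ hx₀))
    obtain ⟨a, haΔ, hca, hav⟩ := exists_simple_pos_inner hv c hc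
    have haΦ := hΔ.1 haΔ
    have haa : 0 < ⟪a,a⟫ := inner_pos_of_mem hΦ haΦ
    have hfa := hf a haΔ
    have hsplit : ∀ x ∈ Δ, (dβ x : ℝ) = (dα x : ℝ) + c x := by
      have hh : ∑ x ∈ Δ, (dβ x : ℝ) • x = ∑ x ∈ Δ, ((dα x : ℝ) + c x) • x := by
        simp only [add_smul, Finset.sum_add_distrib, ← hdα, ← hdβ, ← hc]
        abel
      exact coeff_eq hΔ.2.1 hh
    have hkey : r ≤ (c a : ℝ) * ⟪a,a⟫ := by
      obtain ⟨j1, hj1⟩ := long_coeff hΦ hΔ hr (∑ x ∈ Δ, dα x) α hαΦ hαr dα hdα rfl a haΔ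
      obtain ⟨j2, hj2⟩ := long_coeff hΦ hΔ hr (∑ x ∈ Δ, dβ x) β hβΦ hβr dβ hdβ rfl a haΔ
      have h1 := hsplit a haΔ
      have hj12 : (c a : ℝ) * ⟪a,a⟫ = ((j2:ℝ) - j1) * r := by
        have he : (c a : ℝ) = (dβ a : ℝ) - dα a := by linarith
        rw [he, sub_mul, hj1, hj2]
        ring
      have hcapos : (0:ℝ) < (c a : ℝ) := by exact_mod_cast hca
      have hpos2 : (0:ℝ) < ((j2:ℝ)-j1)*r := by rw [← hj12]; exact mul_pos hcapos haa
      have hj1j2 : (j1:ℝ) < j2 := by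
        by_contra hcon
        push_neg at hcon
        have : ((j2:ℝ)-j1)*r ≤ 0 :=
          mul_nonpos_of_nonpos_of_nonneg (by linarith) (le_of_lt hrpos)
        linarith
      have hjn : j1 < j2 := by exact_mod_cast hj1j2
      have hjr : (j1:ℝ) + 1 ≤ j2 := by exact_mod_cast hjn
      have hfin : (1:ℝ)*r ≤ ((j2:ℝ)-j1)*r :=
        mul_le_mul_of_nonneg_right (by linarith) (le_of_lt hrpos)
      rw [one_mul] at hfin
      linarith
    rcases lt_or_ge 0 ⟪a, β⟫ with hbpos | hbnp
    · -- Case A : reflect β down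
      have hβa : β ≠ a := by
        intro h
        subst h
        have hasum : β = ∑ x ∈ Δ, (if x = β then (1:ℝ) else 0) • x := by
          rw [sum_delta β haΔ 1, one_smul]
        have h2 := coeff_eq hΔ.2.1 (hdβ.symm.trans hasum)
        have hα0 : α = 0 := by
          rw [hdα]; apply Finset.sum_eq_zero; intro x hx
          have e1 := hsplit x hx
          have e2 := h2 x hx
          have h0d : (0:ℝ) ≤ (dα x : ℝ) := Nat.cast_nonneg _
          by_cases hxβ : x = β
          · subst hxβ
            rw [if_pos rfl] at e2
            have hc1 : (1:ℝ) ≤ (c x : ℝ) := by exact_mod_cast hca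
            have hd0 : (dα x : ℝ) = 0 := by linarith
            rw [hd0, zero_smul]
          · rw [if_neg hxβ] at e2
            have h0c : (0:ℝ) ≤ (c x : ℝ) := Nat.cast_nonneg _
            have hd0 : (dα x : ℝ) = 0 := by linarith
            rw [hd0, zero_smul]
        exact hΦ.nonzero (hα0 ▸ hαΦ)
      have h2ab : 2*⟪a,β⟫ = r := two_inner_eq hΦ hr haΦ hβΦ hβr (Ne.symm hβa) hbpos
      set m : ℝ := 2 * ⟪a,β⟫ / ⟪a,a⟫ with hm
      have hmem : β - m • a ∈ Φ := hΦ.reflect_mem a haΦ β hβΦ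
      have hma : m * ⟪a,a⟫ = r := by rw [hm]; field_simp; linarith
      obtain ⟨dβ', hdβ', hdβ'x, hdβ'a⟩ := reflect_pos hΦ hΔ haΔ hβΦ hβa hmem hdβ
      have hβ' : β - m • a ∈ posRoots Φ Δ := ⟨hmem, dβ', hdβ'⟩
      have hβ'r : ⟪β - m•a, β - m•a⟫ = r := by rw [hm, reflect_norm a β (ne_of_gt haa), hβr]
      obtain ⟨z, hz⟩ := hΦ.crystallographic a haΦ β hβΦ
      have hzm : (z:ℝ) = m := by rw [hm, ← hz]
      have hmpos : 0 < m := div_pos (by linarith) haa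
      have hz0 : 0 < z := by exact_mod_cast (show (0:ℝ) < (z:ℝ) by rw [hzm]; exact hmpos)
      set N := z.toNat with hNdef
      have hzN : (N:ℤ) = z := Int.toNat_of_nonneg (by omega)
      have hN : (N:ℝ) = m := by rw [← hzm]; exact_mod_cast hzN
      have hN1 : 1 ≤ N := by omega
      have hNca : N ≤ c a := by
        have hh : (N:ℝ) ≤ (c a:ℝ) := by
          rw [hN]
          by_contra hcon
          push_neg at hcon
          have := mul_lt_mul_of_pos_right hcon haa
          linarith
        exact_mod_cast hh
      set c' : V → ℕ := fun x => if x = a then c a - N else c x with hc'def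
      have hpt : ∀ x ∈ Δ, (c' x : ℝ) • x = (c x : ℝ) • x - (if x = a then (N:ℝ) else 0) • x := by
        intro x hx
        by_cases hxa : x = a
        · subst hxa
          simp only [hc'def, if_pos rfl]
          rw [← sub_smul]
          congr 1
          push_cast [Nat.cast_sub hNca]
          ring
        · simp [hc'def, hxa]
      have hc'rep : (β - m•a) - α = ∑ x ∈ Δ, (c' x : ℝ) • x := by
        rw [Finset.sum_congr rfl hpt, Finset.sum_sub_distrib, ← hc, sum_delta a haΔ (N:ℝ), hN]
        abel
      have hc'sum : ∑ x ∈ Δ, c' x + N = n := by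
        rw [← hcsum, ← Finset.add_sum_erase Δ c' haΔ, ← Finset.add_sum_erase Δ c haΔ]
        have herase : ∑ x ∈ Δ.erase a, c' x = ∑ x ∈ Δ.erase a, c x :=
          Finset.sum_congr rfl (fun x hx => by simp [hc'def, Finset.ne_of_mem_erase hx])
        have hc'a : c' a = c a - N := by simp [hc'def]
        rw [herase, hc'a]
        omega
      obtain ⟨k, b, g, hb0, hbk, hstep⟩ := IH (∑ x ∈ Δ, c' x) (by omega) α (β - m•a)
        ⟨hαΦ, dα, hdα⟩ hαr hβ' hβ'r c' hc'rep rfl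
      refine ⟨k+1, fun i => match i with | 0 => β | j+1 => b j,
        fun i => match i with | 0 => a | j+1 => g j, rfl, hbk, ?_⟩
      intro i hi
      cases i with
      | zero =>
        refine ⟨haΔ, ?_, ?_, ?_, ?_⟩
        · show b 0 = β - (2*⟪a,β⟫/⟪a,a⟫) • a
          rw [hb0, hm]
        · show b 0 ∈ posRoots Φ Δ
          rw [hb0]; exact hβ'
        · show ⟪b 0, b 0⟫ = r
          rw [hb0]; exact hβ'r
        · show f (coroot (b 0)) = f (coroot β) - 1
          rw [hb0]
          exact coroot_drop f (ne_of_gt hrpos) (ne_of_gt haa) hfa hβr hβ'r hma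
      | succ j =>
        exact hstep j (by omega)
    · -- Case B : reflect α up
      have haα : ⟪a,α⟫ < 0 := by
        rw [inner_sub_right] at hav; linarith
      have hnegA : -a ∈ Φ := by
        have h2 := hΦ.reflect_mem a haΦ a haΦ
        have e1 : 2*⟪a,a⟫/⟪a,a⟫ = 2 := by field_simp
        rw [e1] at h2
        have e2 : a - (2:ℝ) • a = -a := by
          rw [two_smul]; abel
        rwa [e2] at h2
      have hnegne : -a ≠ α := by
        intro h
        have hrep : α = ∑ x ∈ Δ, (if x = a then (-1:ℝ) else 0) • x := by
          rw [sum_delta a haΔ (-1), ← h]; simp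
        have h2 := coeff_eq hΔ.2.1 (hdα.symm.trans hrep) a haΔ
        rw [if_pos rfl] at h2
        have : (0:ℝ) ≤ (dα a : ℝ) := Nat.cast_nonneg _
        linarith
      have h2a : 2*⟪a,α⟫ = -r := by
        have h2 := two_inner_eq hΦ hr hnegA hαΦ hαr hnegne
          (by rw [inner_neg_left]; simp; linarith)
        rw [inner_neg_left] at h2; linarith
      have hαa : α ≠ a := by
        intro h; rw [h] at haα; linarith
      set m : ℝ := 2 * ⟪a,α⟫ / ⟪a,a⟫ with hm
      have hma2 : m * ⟪a,a⟫ = 2*⟪a,α⟫ := by rw [hm]; field_simp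
      have hmneg : m < 0 := div_neg_of_neg_of_pos (by linarith) haa
      have hmem : α - m • a ∈ Φ := hΦ.reflect_mem a haΦ α hαΦ
      have hmaneg : (-m) * ⟪a,a⟫ = r := by linear_combination -hma2 - h2a
      obtain ⟨dα', hdα', hdα'x, hdα'a⟩ := reflect_pos hΦ hΔ haΔ hαΦ hαa hmem hdα
      have hα' : α - m • a ∈ posRoots Φ Δ := ⟨hmem, dα', hdα'⟩
      have hα'r : ⟪α - m•a, α - m•a⟫ = r := by rw [hm, reflect_norm a α (ne_of_gt haa), hαr]
      obtain ⟨z, hz⟩ := hΦ.crystallographic a haΦ α hαΦ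
      have hzm : (z:ℝ) = m := by rw [hm, ← hz]
      have hz0 : z < 0 := by exact_mod_cast (show (z:ℝ) < 0 by rw [hzm]; exact hmneg)
      set N := (-z).toNat with hNdef
      have hzN : (N:ℤ) = -z := Int.toNat_of_nonneg (by omega)
      have hN : (N:ℝ) = -m := by
        rw [← hzm]; exact_mod_cast hzN
      have hN1 : 1 ≤ N := by omega
      have hNca : N ≤ c a := by
        have hh : (N:ℝ) ≤ (c a:ℝ) := by
          rw [hN]
          by_contra hcon
          push_neg at hcon
          have := mul_lt_mul_of_pos_right hcon haa
          linarith
        exact_mod_cast hh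
      set c' : V → ℕ := fun x => if x = a then c a - N else c x with hc'def
      have hpt : ∀ x ∈ Δ, (c' x : ℝ) • x = (c x : ℝ) • x - (if x = a then (N:ℝ) else 0) • x := by
        intro x hx
        by_cases hxa : x = a
        · subst hxa
          simp only [hc'def, if_pos rfl]
          rw [← sub_smul]
          congr 1
          push_cast [Nat.cast_sub hNca]
          ring
        · simp [hc'def, hxa]
      have hc'rep : β - (α - m•a) = ∑ x ∈ Δ, (c' x : ℝ) • x := by
        rw [Finset.sum_congr rfl hpt, Finset.sum_sub_distrib, ← hc, sum_delta a haΔ (N:ℝ), hN,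
          neg_smul]
        abel
      have hc'sum : ∑ x ∈ Δ, c' x + N = n := by
        rw [← hcsum, ← Finset.add_sum_erase Δ c' haΔ, ← Finset.add_sum_erase Δ c haΔ]
        have herase : ∑ x ∈ Δ.erase a, c' x = ∑ x ∈ Δ.erase a, c x :=
          Finset.sum_congr rfl (fun x hx => by simp [hc'def, Finset.ne_of_mem_erase hx])
        have hc'a : c' a = c a - N := by simp [hc'def]
        rw [herase, hc'a]
        omega
      obtain ⟨k, b, g, hb0, hbk, hstep⟩ := IH (∑ x ∈ Δ, c' x) (by omega) (α - m•a) β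
        hα' hα'r ⟨hβΦ, dβ, hdβ⟩ hβr c' hc'rep rfl
      have heq : (α - m•a) - (-m)•a = α := by
        rw [neg_smul, sub_neg_eq_add]; abel
      refine ⟨k+1, fun i => if i = k+1 then α else b i, fun i => if i = k then a else g i,
        ?_, ?_, ?_⟩
      · show (if 0 = k+1 then α else b 0) = β
        rw [if_neg (by omega), hb0]
      · show (if k+1 = k+1 then α else b (k+1)) = α
        rw [if_pos rfl]
      intro i hi
      by_cases hik : i = k
      · have e1 : (if i = k+1 then α else b i) = α - m•a := by
          rw [if_neg (by omega), hik, hbk]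
        have e2 : (if i+1 = k+1 then α else b (i+1)) = α := by
          rw [if_pos (by omega)]
        have e3 : (if i = k then a else g i) = a := by rw [if_pos hik]
        have hia : ⟪a, α - m•a⟫ = -⟪a,α⟫ := by
          rw [inner_sub_right, real_inner_smul_right]; linarith
        have hcoef : 2*⟪a, α - m•a⟫/⟪a,a⟫ = -m := by rw [hia, hm]; ring
        have hx' : ⟪(α - m•a) - (-m)•a, (α - m•a) - (-m)•a⟫ = r := by rw [heq]; exact hαr
        have hdrop := coroot_drop (r := r) f (ne_of_gt hrpos) (ne_of_gt haa) hfa hα'r hx' hmaneg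
        rw [heq] at hdrop
        refine ⟨?_, ?_, ?_, ?_, ?_⟩
        · show (if i = k then a else g i) ∈ Δ
          rw [e3]; exact haΔ
        · show (if i+1 = k+1 then α else b (i+1)) = (if i = k+1 then α else b i) -
            (2*⟪(if i = k then a else g i), (if i = k+1 then α else b i)⟫ /
              ⟪(if i = k then a else g i), (if i = k then a else g i)⟫) •
                (if i = k then a else g i)
          rw [e1, e2, e3, hcoef, neg_smul, sub_neg_eq_add]
          abel
        · show (if i+1 = k+1 then α else b (i+1)) ∈ posRoots Φ Δ
          rw [e2]; exact ⟨hαΦ, dα, hdα⟩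
        · show ⟪(if i+1 = k+1 then α else b (i+1)), (if i+1 = k+1 then α else b (i+1))⟫ = r
          rw [e2]; exact hαr
        · show f (coroot (if i+1 = k+1 then α else b (i+1))) =
            f (coroot (if i = k+1 then α else b i)) - 1
          rw [e1, e2]; exact hdrop
      · have h2 : ¬ (i = k+1) := by omega
        have h3 : ¬ (i+1 = k+1) := by omega
        have h4 : ¬ (i = k) := hik
        simp only [if_neg h2, if_neg h3, if_neg h4]
        exact hstep i (by omega)

end Helpers
/-- Let `α ≤ β` be positive long roots (`β − α` a nonnegative integer
combination of simple roots). Then there is a simple path from `β` down to `α`: a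
sequence of long roots `β = b₀, b₁, …, b_k = α` and simple roots `g₀, …, g_{k−1}` with
`b_{i+1} = s_{g_i}(b_i)` and level increasing by one at each step — for positive long
roots this means the dual height `ht^∨ = f ∘ coroot` drops by one at each step. -/
theorem exists_simple_path (Φ : Set V) (hΦ : IsIrredRootSystem Φ)
    (Δ : Finset V) (hΔ : IsBase Φ Δ)
    (r : ℝ) (hr : IsGreatest {x : ℝ | ∃ α ∈ Φ, x = ⟪α, α⟫} r)
    (t : V) (ht : IsHighestRoot Φ Δ t)
    (f : V →ₗ[ℝ] ℝ) (hf : ∀ a ∈ Δ, f (coroot a) = 1)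
    (α β : V) (hα : α ∈ posRoots Φ Δ) (hαlg : ⟪α, α⟫ = r)
    (hβ : β ∈ posRoots Φ Δ) (hβlg : ⟪β, β⟫ = r)
    (hle : ∃ c : V → ℕ, β - α = ∑ a ∈ Δ, (c a : ℝ) • a) :
    ∃ (k : ℕ) (b g : ℕ → V), b 0 = β ∧ b k = α ∧
      ∀ i < k, g i ∈ Δ ∧
        b (i + 1) = b i - (2 * ⟪g i, b i⟫ / ⟪g i, g i⟫) • g i ∧
        b (i + 1) ∈ posRoots Φ Δ ∧ ⟪b (i + 1), b (i + 1)⟫ = r ∧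
        f (coroot (b (i + 1))) = f (coroot (b i)) - 1 := by
  obtain ⟨c, hc⟩ := hle
  exact main_chain hΦ hΔ hr f hf (∑ x ∈ Δ, c x) α β hα hαlg hβ hβlg c hc rfl
end

section
/- Let 𝒟 be a triangulated category with a t-structure (𝒟^{≤0}, 𝒟^{≥0}) whose heart 𝒞 carries a torsion theory (𝒯, ℱ). Then the pair (𝒟^{≤0⁺}, 𝒟^{≥0⁺}) defined by 𝒟^{≤0⁺} = {A ∈ 𝒟^{≤1} : H¹(A) ∈ 𝒯} and 𝒟^{≥0⁺} = {A ∈ 𝒟^{≥0} : H⁰(A) ∈ ℱ} is again a t-structure on 𝒟. -/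
open CategoryTheory CategoryTheory.Limits CategoryTheory.Pretriangulated
  CategoryTheory.Triangulated

namespace HRSTiltAux

open ZeroObject

variable {𝒟 : Type*} [Category 𝒟] [Preadditive 𝒟] [HasZeroObject 𝒟] [HasShift 𝒟 ℤ]
  [∀ n : ℤ, (shiftFunctor 𝒟 n).Additive] [Pretriangulated 𝒟]

/-- Transport a distinguished triangle along isomorphisms of its three objects. -/
lemma dist_of_iso (T : Triangle 𝒟) (hT : T ∈ distTriang 𝒟) {X₁ X₂ X₃ : 𝒟}
    (e₁ : T.obj₁ ≅ X₁) (e₂ : T.obj₂ ≅ X₂) (e₃ : T.obj₃ ≅ X₃) :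
    Triangle.mk (e₁.inv ≫ T.mor₁ ≫ e₂.hom) (e₂.inv ≫ T.mor₂ ≫ e₃.hom)
      (e₃.inv ≫ T.mor₃ ≫ e₁.hom⟦(1 : ℤ)⟧') ∈ distTriang 𝒟 := by
  refine isomorphic_distinguished _ hT _
    (Triangle.isoMk _ _ e₁.symm e₂.symm e₃.symm ?_ ?_ ?_)
  all_goals (dsimp; simp [Triangle.mk, ← Functor.map_comp])

variable (t : TStructure 𝒟)

lemma zero_of_le {X Y : 𝒟} (f : X ⟶ Y) (n₀ n₁ : ℤ) (h : n₀ < n₁)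
    (hX : t.le n₀ X) (hY : t.ge n₁ Y) : f = 0 := by
  have h1 : t.le 0 (X⟦n₀⟧) := t.le_shift n₀ n₀ 0 (by omega) X hX
  have h2 : t.ge 1 (Y⟦n₀⟧) := t.ge_shift (n₀ + 1) n₀ 1 (by omega) Y
    (t.ge_antitone (by omega : n₀ + 1 ≤ n₁) Y hY)
  have hz : (shiftFunctor 𝒟 n₀).map f = 0 := t.zero' _ h1 h2
  apply (shiftFunctor 𝒟 n₀).map_injective
  rw [hz, Functor.map_zero]

lemma le_ext (T : Triangle 𝒟) (hT : T ∈ distTriang 𝒟) (n : ℤ)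
    (h₁ : t.le n T.obj₁) (h₃ : t.le n T.obj₃) : t.le n T.obj₂ := by
  obtain ⟨X, Y, hX, hY, f, g, h, mem⟩ := t.exists_triangle T.obj₂ n (n + 1) rfl
  have hg : g = 0 := by
    have h0 : T.mor₁ ≫ g = 0 := zero_of_le t _ n (n + 1) (by omega) h₁ hY
    obtain ⟨g', hg'⟩ := Triangle.yoneda_exact₂ T hT g h0
    rw [hg', zero_of_le t g' n (n + 1) (by omega) h₃ hY, comp_zero]
  have hY0 : IsZero Y := by
    obtain ⟨u, hu⟩ := Triangle.yoneda_exact₃ _ mem (𝟙 Y)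
      (by simp [Triangle.mk, hg]; rfl)
    have hu0 : u = 0 := zero_of_le t u (n - 1) (n + 1) (by omega)
      (t.le_shift n 1 (n - 1) (by omega) X hX) hY
    rw [IsZero.iff_id_eq_zero, hu, hu0, comp_zero]; rfl
  have : IsIso f := (Triangle.isZero₃_iff_isIso₁ _ mem).1 hY0
  exact ObjectProperty.prop_of_iso (t.le n) (asIso f) hX

lemma ge_ext (T : Triangle 𝒟) (hT : T ∈ distTriang 𝒟) (n : ℤ)
    (h₁ : t.ge n T.obj₁) (h₃ : t.ge n T.obj₃) : t.ge n T.obj₂ := by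
  obtain ⟨X, Y, hX, hY, f, g, h, mem⟩ := t.exists_triangle T.obj₂ (n - 1) n (by omega)
  have hf : f = 0 := by
    have h0 : f ≫ T.mor₂ = 0 := zero_of_le t _ (n - 1) n (by omega) hX h₃
    obtain ⟨g', hg'⟩ := Triangle.coyoneda_exact₂ T hT f h0
    rw [hg', zero_of_le t g' (n - 1) n (by omega) hX h₁, zero_comp]
  have hX0 : IsZero X := by
    obtain ⟨u, hu⟩ := Triangle.coyoneda_exact₂ _ (inv_rot_of_distTriang _ mem) (𝟙 X)
      (by simp [Triangle.mk, hf]; exact comp_zero)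
    have hu0 : u = 0 := zero_of_le t u (n - 1) (n + 1) (by omega) hX
      (t.ge_shift n (-1) (n + 1) (by omega) Y hY)
    rw [IsZero.iff_id_eq_zero, hu, hu0, zero_comp]; rfl
  have : IsIso g := (Triangle.isZero₁_iff_isIso₂ _ mem).1 hX0
  exact ObjectProperty.prop_of_iso (t.ge n) (asIso g).symm hY

lemma le_of_isZero (n : ℤ) {Z : 𝒟} (hZ : IsZero Z) : t.le n Z := by
  obtain ⟨X, Y, hX, hY, f, g, h, mem⟩ := t.exists_triangle Z n (n + 1) rfl
  have h0 : t.le n ((0 : 𝒟)) := by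
    refine le_ext t _ (rot_of_distTriang _ (contractible_distinguished X)) n hX ?_
    exact t.le_shift (n + 1) 1 n (by omega) X (t.le_monotone (by omega : n ≤ n + 1) X hX)
  exact ObjectProperty.prop_of_iso (t.le n) hZ.isoZero.symm h0

lemma ge_of_isZero (n : ℤ) {Z : 𝒟} (hZ : IsZero Z) : t.ge n Z := by
  obtain ⟨X, Y, hX, hY, f, g, h, mem⟩ := t.exists_triangle Z (n - 1) n (by omega)
  have hY' : t.ge (n + 1) (Y⟦(-1 : ℤ)⟧) := t.ge_shift n (-1) (n + 1) (by omega) Y hY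
  have h0 : t.ge n ((0 : 𝒟)) := by
    refine ge_ext t _ (rot_of_distTriang _ (contractible_distinguished (Y⟦(-1 : ℤ)⟧))) n
      (t.ge_antitone (by omega : n ≤ n + 1) _ hY') ?_
    exact t.ge_shift (n + 1) 1 n (by omega) _ hY'
  exact ObjectProperty.prop_of_iso (t.ge n) hZ.isoZero.symm h0

variable (T F : Set 𝒟)

/-- The "≤ 0" part of the tilted t-structure. -/
def tiltLE (A : 𝒟) : Prop :=
  ∃ (A' : 𝒟) (_ : t.le 0 A') (τ : 𝒟) (_ : τ ∈ T) (f : A' ⟶ A)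
    (g : A ⟶ τ⟦(-1 : ℤ)⟧) (h : τ⟦(-1 : ℤ)⟧ ⟶ A'⟦(1 : ℤ)⟧),
    Triangle.mk f g h ∈ distTriang 𝒟

/-- The "≥ 0" part of the tilted t-structure. -/
def tiltGE (A : 𝒟) : Prop :=
  ∃ (φ : 𝒟) (_ : φ ∈ F) (B : 𝒟) (_ : t.ge 1 B) (f : φ ⟶ A) (g : A ⟶ B)
    (h : B ⟶ φ⟦(1 : ℤ)⟧), Triangle.mk f g h ∈ distTriang 𝒟

lemma tiltLE_iso {A B : 𝒟} (e : A ≅ B) (hA : tiltLE t T A) : tiltLE t T B := by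
  obtain ⟨A', hA', τ, hτ, f, g, h, mem⟩ := hA
  exact ⟨A', hA', τ, hτ, f ≫ e.hom, e.inv ≫ g, h,
    isomorphic_distinguished _ mem _
      (Triangle.isoMk _ _ (Iso.refl _) e.symm (Iso.refl _) (by simp [Triangle.mk]) (by simp [Triangle.mk]) (by simp [Triangle.mk]))⟩

lemma tiltGE_iso {A B : 𝒟} (e : A ≅ B) (hA : tiltGE t F A) : tiltGE t F B := by
  obtain ⟨φ, hφ, B', hB', f, g, h, mem⟩ := hA
  exact ⟨φ, hφ, B', hB', f ≫ e.hom, e.inv ≫ g, h,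
    isomorphic_distinguished _ mem _
      (Triangle.isoMk _ _ (Iso.refl _) e.symm (Iso.refl _) (by simp [Triangle.mk]) (by simp [Triangle.mk]) (by simp [Triangle.mk]))⟩

lemma tiltLE_le (hT_heart : ∀ X ∈ T, t.le 0 X ∧ t.ge 0 X) {A : 𝒟}
    (hA : tiltLE t T A) : t.le 1 A := by
  obtain ⟨A', hA', τ, hτ, f, g, h, mem⟩ := hA
  exact le_ext t _ mem 1 (t.le_monotone (by omega : (0:ℤ) ≤ 1) A' hA')
    (t.le_shift 0 (-1) 1 (by omega) τ (hT_heart τ hτ).1)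

lemma tiltGE_ge (hF_heart : ∀ X ∈ F, t.le 0 X ∧ t.ge 0 X) {A : 𝒟}
    (hA : tiltGE t F A) : t.ge 0 A := by
  obtain ⟨φ, hφ, B, hB, f, g, h, mem⟩ := hA
  exact ge_ext t _ mem 0 (hF_heart φ hφ).2 (t.ge_antitone (by omega : (0:ℤ) ≤ 1) B hB)

end HRSTiltAux

open HRSTiltAux ZeroObject in
/-- **Happel–Reiten–Smalø tilt.** Let `𝒟` be a triangulated category
with a t-structure `t` whose heart `𝒞 = 𝒟^{≤0} ∩ 𝒟^{≥0}` carries a torsion theory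
`(𝒯, ℱ)` (both classes lie in the heart and are closed under isomorphisms, morphisms
from `𝒯` to `ℱ` vanish, and every object of the heart is an extension of an object of
`ℱ` by an object of `𝒯`).  Then the pair
`𝒟^{≤0⁺} = {A ∈ 𝒟^{≤1} : H¹(A) ∈ 𝒯}` and `𝒟^{≥0⁺} = {A ∈ 𝒟^{≥0} : H⁰(A) ∈ ℱ}`
is again a t-structure on `𝒟`.  (For `A ∈ 𝒟^{≤1}`, the condition `H¹(A) ∈ 𝒯` is
expressed by the existence of a distinguished triangle `A' → A → τ⟦−1⟧ → A'⟦1⟧` with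
`A' ∈ 𝒟^{≤0}` and `τ ∈ 𝒯`; for `A ∈ 𝒟^{≥0}`, the condition `H⁰(A) ∈ ℱ` is expressed
by the existence of a distinguished triangle `φ → A → B → φ⟦1⟧` with `φ ∈ ℱ` and
`B ∈ 𝒟^{≥1}`.) -/
theorem tStructure_tilt_of_torsionTheory
    {𝒟 : Type*} [Category 𝒟] [Preadditive 𝒟] [HasZeroObject 𝒟] [HasShift 𝒟 ℤ]
    [∀ n : ℤ, (shiftFunctor 𝒟 n).Additive] [Pretriangulated 𝒟] [IsTriangulated 𝒟]
    (t : TStructure 𝒟) (T F : Set 𝒟)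
    (hT_heart : ∀ X ∈ T, t.le 0 X ∧ t.ge 0 X)
    (hF_heart : ∀ X ∈ F, t.le 0 X ∧ t.ge 0 X)
    (hT_iso : ∀ ⦃X Y : 𝒟⦄, (X ≅ Y) → X ∈ T → Y ∈ T)
    (hF_iso : ∀ ⦃X Y : 𝒟⦄, (X ≅ Y) → X ∈ F → Y ∈ F)
    (h_hom : ∀ τ ∈ T, ∀ φ ∈ F, ∀ u : τ ⟶ φ, u = 0)
    (h_ses : ∀ A : 𝒟, t.le 0 A → t.ge 0 A →
      ∃ (τ : 𝒟) (_ : τ ∈ T) (φ : 𝒟) (_ : φ ∈ F) (a : τ ⟶ A) (b : A ⟶ φ)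
        (c : φ ⟶ τ⟦(1 : ℤ)⟧), Triangle.mk a b c ∈ distTriang 𝒟) :
    ∃ t' : TStructure 𝒟,
      (∀ A : 𝒟, t'.le 0 A ↔
        ∃ (A' : 𝒟) (_ : t.le 0 A') (τ : 𝒟) (_ : τ ∈ T) (f : A' ⟶ A)
          (g : A ⟶ τ⟦(-1 : ℤ)⟧) (h : τ⟦(-1 : ℤ)⟧ ⟶ A'⟦(1 : ℤ)⟧),
          Triangle.mk f g h ∈ distTriang 𝒟) ∧
      (∀ A : 𝒟, t'.ge 0 A ↔
        ∃ (φ : 𝒟) (_ : φ ∈ F) (B : 𝒟) (_ : t.ge 1 B) (f : φ ⟶ A) (g : A ⟶ B)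
          (h : B ⟶ φ⟦(1 : ℤ)⟧), Triangle.mk f g h ∈ distTriang 𝒟) := by
  -- Step 0: `T` and `F` contain all zero objects.
  obtain ⟨τ₀, hτ₀T, φ₀, hφ₀F, a₀, b₀, c₀, mem₀⟩ :=
    h_ses (0 : 𝒟) (le_of_isZero t 0 (isZero_zero 𝒟)) (ge_of_isZero t 0 (isZero_zero 𝒟))
  have hφ₀z : IsZero φ₀ := by
    have hiso : IsIso c₀ := (Triangle.isZero₂_iff_isIso₃ _ mem₀).1 (isZero_zero 𝒟)
    have hle : t.le (-1) φ₀ := ObjectProperty.prop_of_iso (t.le (-1)) (asIso c₀).symm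
      (t.le_shift 0 1 (-1) (by omega) τ₀ (hT_heart τ₀ hτ₀T).1)
    rw [IsZero.iff_id_eq_zero]
    exact zero_of_le t _ (-1) 0 (by omega) hle (hF_heart φ₀ hφ₀F).2
  have hτ₀z : IsZero τ₀ := Triangle.isZero₁_of_isZero₂₃ _ mem₀ (isZero_zero 𝒟) hφ₀z
  have hzT : ∀ {Z : 𝒟}, IsZero Z → Z ∈ T := fun hZ => hT_iso (hτ₀z.iso hZ) hτ₀T
  have hzF : ∀ {Z : 𝒟}, IsZero Z → Z ∈ F := fun hZ => hF_iso (hφ₀z.iso hZ) hφ₀F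
  refine ⟨{
    le := fun n X => tiltLE t T (X⟦n⟧)
    ge := fun n X => tiltGE t F (X⟦n⟧)
    le_isClosedUnderIsomorphisms := fun n =>
      ⟨fun e h => tiltLE_iso t T ((shiftFunctor 𝒟 n).mapIso e) h⟩
    ge_isClosedUnderIsomorphisms := fun n =>
      ⟨fun e h => tiltGE_iso t F ((shiftFunctor 𝒟 n).mapIso e) h⟩
    le_shift := fun n a n' hh X hX => tiltLE_iso t T ((shiftFunctorAdd' 𝒟 a n' n hh).app X) hX
    ge_shift := fun n a n' hh X hX => tiltGE_iso t F ((shiftFunctorAdd' 𝒟 a n' n hh).app X) hX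
    zero' := ?_
    le_zero_le := ?_
    ge_one_le := ?_
    exists_triangle_zero_one := ?_ },
    fun A => ⟨fun h => tiltLE_iso t T ((shiftFunctorZero 𝒟 ℤ).app A) h,
              fun h => tiltLE_iso t T ((shiftFunctorZero 𝒟 ℤ).app A).symm h⟩,
    fun A => ⟨fun h => tiltGE_iso t F ((shiftFunctorZero 𝒟 ℤ).app A) h,
              fun h => tiltGE_iso t F ((shiftFunctorZero 𝒟 ℤ).app A).symm h⟩⟩
  -- zero'
  · intro X Y f hX hY
    replace hX : tiltLE t T X := tiltLE_iso t T ((shiftFunctorZero 𝒟 ℤ).app X) hX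
    obtain ⟨A', hA', τ, hτ, a, b, c, memX⟩ := hX
    have hY1 : t.ge 0 (Y⟦(1 : ℤ)⟧) := tiltGE_ge t F hF_heart hY
    obtain ⟨φ, hφ, B, hB, d, e', w, memY⟩ := hY
    have memX1 : (Triangle.shiftFunctor 𝒟 (1 : ℤ)).obj (Triangle.mk a b c) ∈ distTriang 𝒟 :=
      Triangle.shift_distinguished _ memX 1
    have step1 : ((Triangle.shiftFunctor 𝒟 (1 : ℤ)).obj (Triangle.mk a b c)).mor₁ ≫
        f⟦(1 : ℤ)⟧' = 0 :=
      zero_of_le t _ (-1) 0 (by omega) (t.le_shift 0 1 (-1) (by omega) A' hA') hY1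
    obtain ⟨g', hg'⟩ := Triangle.yoneda_exact₂ _ memX1 (f⟦(1 : ℤ)⟧') step1
    have e₂ : (τ⟦(-1 : ℤ)⟧)⟦(1 : ℤ)⟧ ≅ τ := (shiftEquiv 𝒟 (1 : ℤ)).counitIso.app τ
    have step2 : g' ≫ e' = 0 := by
      have hτle : t.le 0 ((τ⟦(-1 : ℤ)⟧)⟦(1 : ℤ)⟧) :=
        ObjectProperty.prop_of_iso (t.le 0) e₂.symm (hT_heart τ hτ).1
      exact zero_of_le t _ 0 1 (by omega) hτle hB
    obtain ⟨u, hu⟩ := Triangle.coyoneda_exact₂ _ memY g' step2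
    have hu0 : u = 0 := by
      have h0 := h_hom τ hτ φ hφ (e₂.inv ≫ u)
      exact (e₂.hom_inv_id_assoc u).symm.trans
        ((congrArg (e₂.hom ≫ ·) h0).trans comp_zero)
    have hf1 : f⟦(1 : ℤ)⟧' = 0 := hg'.trans (by rw [hu, hu0, zero_comp]; exact comp_zero)
    apply (shiftFunctor 𝒟 (1 : ℤ)).map_injective
    rw [hf1, Functor.map_zero]
  -- le_zero_le
  · intro X hX
    replace hX : tiltLE t T X := tiltLE_iso t T ((shiftFunctorZero 𝒟 ℤ).app X) hX
    obtain ⟨A', hA', τ, hτ, a, b, c, memX⟩ := hX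
    have hXle : t.le 1 X := tiltLE_le t T hT_heart ⟨A', hA', τ, hτ, a, b, c, memX⟩
    have hX1 : t.le 0 (X⟦(1 : ℤ)⟧) := t.le_shift 1 1 0 (by omega) X hXle
    have hz' : IsZero ((τ₀ : 𝒟)⟦(-1 : ℤ)⟧) := (shiftFunctor 𝒟 (-1 : ℤ)).map_isZero hτ₀z
    exact ⟨X⟦(1 : ℤ)⟧, hX1, τ₀, hτ₀T, _, _, _,
      dist_of_iso _ (contractible_distinguished (X⟦(1 : ℤ)⟧)) (Iso.refl _) (Iso.refl _)
        ((isZero_zero 𝒟).iso hz')⟩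
  -- ge_one_le
  · intro X hX
    obtain ⟨φ, hφ, B, hB, d, e', w, memY⟩ := hX
    have hge : t.ge 0 (X⟦(1 : ℤ)⟧) := tiltGE_ge t F hF_heart ⟨φ, hφ, B, hB, d, e', w, memY⟩
    have hXge : t.ge 1 X := by
      have h1 := t.ge_shift 0 (-1) 1 (by omega) _ hge
      exact ObjectProperty.prop_of_iso (t.ge 1) ((shiftEquiv 𝒟 (1 : ℤ)).unitIso.symm.app X) h1
    have hφ₀z' : IsZero ((0 : 𝒟)) := isZero_zero 𝒟
    have hQX : tiltGE t F X :=
      ⟨φ₀, hφ₀F, X, hXge, _, _, _,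
        dist_of_iso _ (contractible_distinguished₁ X) (hφ₀z'.iso hφ₀z) (Iso.refl _)
          (Iso.refl _)⟩
    exact tiltGE_iso t F ((shiftFunctorZero 𝒟 ℤ).app X).symm hQX
  -- exists_triangle_zero_one
  · intro A
    obtain ⟨B, C, hB, hC, i, p, δ, memT1⟩ := t.exists_triangle A 1 2 (by omega)
    obtain ⟨B', H, hB', hH, j, q, δ', memT2⟩ := t.exists_triangle B 0 1 (by omega)
    have hH1 : t.le 1 H := le_ext t _ (rot_of_distTriang _ memT2) 1 hB
      (t.le_monotone (by omega : (-1:ℤ) ≤ 1) _ (t.le_shift 0 1 (-1) (by omega) B' hB'))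
    obtain ⟨τ, hτ, φ, hφ, a, b, c, memH⟩ := h_ses (H⟦(1 : ℤ)⟧)
      (t.le_shift 1 1 0 (by omega) H hH1) (t.ge_shift 1 1 0 (by omega) H hH)
    -- shift the torsion triangle by (-1) and identify the middle object with `H`
    have memTH : (Triangle.shiftFunctor 𝒟 (-1 : ℤ)).obj (Triangle.mk a b c) ∈ distTriang 𝒟 :=
      Triangle.shift_distinguished _ memH (-1)
    have eH : (H⟦(1 : ℤ)⟧)⟦(-1 : ℤ)⟧ ≅ H := (shiftEquiv 𝒟 (1 : ℤ)).unitIso.symm.app H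
    have memTH' := dist_of_iso _ memTH (Iso.refl (τ⟦(-1 : ℤ)⟧)) eH (Iso.refl (φ⟦(-1 : ℤ)⟧))
    set TH' := Triangle.mk
      ((Iso.refl (τ⟦(-1 : ℤ)⟧)).inv ≫
        ((Triangle.shiftFunctor 𝒟 (-1 : ℤ)).obj (Triangle.mk a b c)).mor₁ ≫ eH.hom)
      (eH.inv ≫ ((Triangle.shiftFunctor 𝒟 (-1 : ℤ)).obj (Triangle.mk a b c)).mor₂ ≫
        (Iso.refl (φ⟦(-1 : ℤ)⟧)).hom)
      ((Iso.refl (φ⟦(-1 : ℤ)⟧)).inv ≫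
        ((Triangle.shiftFunctor 𝒟 (-1 : ℤ)).obj (Triangle.mk a b c)).mor₃ ≫
        (Iso.refl (τ⟦(-1 : ℤ)⟧)).hom⟦(1 : ℤ)⟧') with hTH'
    -- the map `s : H ⟶ φ⟦-1⟧`
    -- first octahedron, on `q ≫ s`
    obtain ⟨E, e₀, f₀, memE⟩ := distinguished_cocone_triangle (q ≫ TH'.mor₂)
    have oct1 := Triangulated.someOctahedron (u₁₂ := q) (u₂₃ := TH'.mor₂) rfl
      (rot_of_distTriang _ memT2) (rot_of_distTriang _ memTH') memE
    -- `X := E⟦-1⟧` is tilt-`≤ 0`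
    have memS : (Triangle.shiftFunctor 𝒟 (-1 : ℤ)).obj oct1.triangle ∈ distTriang 𝒟 :=
      Triangle.shift_distinguished _ oct1.mem (-1)
    have eB' : (B'⟦(1 : ℤ)⟧)⟦(-1 : ℤ)⟧ ≅ B' := (shiftEquiv 𝒟 (1 : ℤ)).unitIso.symm.app B'
    have eτ : ((τ⟦(-1 : ℤ)⟧)⟦(1 : ℤ)⟧)⟦(-1 : ℤ)⟧ ≅ τ⟦(-1 : ℤ)⟧ :=
      (shiftEquiv 𝒟 (1 : ℤ)).unitIso.symm.app (τ⟦(-1 : ℤ)⟧)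
    have memX := dist_of_iso _ memS eB' (Iso.refl (E⟦(-1 : ℤ)⟧)) eτ
    have hPX : tiltLE t T (E⟦(-1 : ℤ)⟧) := ⟨B', hB', τ, hτ, _, _, _, memX⟩
    -- triangle `X ⟶ B`
    have memXB := inv_rot_of_distTriang _ memE
    -- second octahedron, on `k ≫ i`
    obtain ⟨Y, g₀, h₀, memA⟩ :=
      distinguished_cocone_triangle ((Triangle.mk (q ≫ TH'.mor₂) e₀ f₀).invRotate.mor₁ ≫ i)
    have oct2 := Triangulated.someOctahedron
      (u₁₂ := (Triangle.mk (q ≫ TH'.mor₂) e₀ f₀).invRotate.mor₁) (u₂₃ := i) rfl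
      memXB memT1 memA
    -- `Y` is tilt-`≥ 1`
    have memQ : (Triangle.shiftFunctor 𝒟 (1 : ℤ)).obj oct2.triangle ∈ distTriang 𝒟 :=
      Triangle.shift_distinguished _ oct2.mem 1
    have hφ' : (φ⟦(-1 : ℤ)⟧)⟦(1 : ℤ)⟧ ∈ F :=
      hF_iso ((shiftEquiv 𝒟 (1 : ℤ)).counitIso.app φ).symm hφ
    have hC1 : t.ge 1 (C⟦(1 : ℤ)⟧) := t.ge_shift 2 1 1 (by omega) C hC
    have hQY : tiltGE t F (Y⟦(1 : ℤ)⟧) :=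
      ⟨(φ⟦(-1 : ℤ)⟧)⟦(1 : ℤ)⟧, hφ', C⟦(1 : ℤ)⟧, hC1,
        ((Triangle.shiftFunctor 𝒟 (1 : ℤ)).obj oct2.triangle).mor₁,
        ((Triangle.shiftFunctor 𝒟 (1 : ℤ)).obj oct2.triangle).mor₂,
        ((Triangle.shiftFunctor 𝒟 (1 : ℤ)).obj oct2.triangle).mor₃, memQ⟩
    exact ⟨E⟦(-1 : ℤ)⟧, Y,
      tiltLE_iso t T ((shiftFunctorZero 𝒟 ℤ).app _).symm hPX, hQY,
      (Triangle.mk (q ≫ TH'.mor₂) e₀ f₀).invRotate.mor₁ ≫ i, g₀, h₀, memA⟩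
end
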